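/- Let S ∈ ℝ^{s×s} be the cyclic Toeplitz matrix with entries a in positions (1,s) and (i+1,i) for i = 1,...,s-1, and zero elsewhere, where s > 2 and 1/2 + 1/2^s ≤ a ≤ 1/√2. Let ĉ be the all-ones vector. If z ∈ ℝ^s has exactly one negative component, in position i, and no zero components, then the generalized Newton iterate z⁺ = (I - SΣ(z))^{-1}ĉ (with Σ(z) = diag(sign(z))) has exactly one negative component, in position 1 + (i mod s), and no zero components. Hence the generalized Newton method cycles among s distinct definite points and never converges. -/

import Mathlib

lemma aux_four_mul_le_two_pow : ∀ s : ℕ, 4 ≤ s → 4 * s ≤ 2 ^ s := by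
  intro s hs
  induction s with
  | zero => omega
  | succ n ih =>
    rcases Nat.lt_or_ge n 4 with h | h
    · have hn : n = 3 := by omega
      subst hn; norm_num
    · have h16 : 16 ≤ 2 ^ n := by
        calc (16:ℕ) = 2^4 := by norm_num
        _ ≤ 2^n := Nat.pow_le_pow_right (by norm_num) h
      have hih := ih (by omega)
      have h2 : 2 ^ (n+1) = 2^n + 2^n := by ring
      omega

lemma aux_one_add_pow_lt_two (s : ℕ) (hs : 3 ≤ s) :
    (1 + 2 * (1/2:ℝ)^s) ^ s < 2 := by
  set y : ℝ := 2 * (1/2:ℝ)^s with hy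
  have hy0 : 0 < y := by positivity
  rcases Nat.lt_or_ge s 4 with h4 | h4
  · have : s = 3 := by omega
    subst this
    norm_num [hy]
  · have hxle : y ≤ 1/8 := by
      rw [hy]
      have : (1/2:ℝ)^s ≤ (1/2)^4 := by
        apply pow_le_pow_of_le_one (by norm_num) (by norm_num) h4
      nlinarith
    have hsy : (s:ℝ) * y ≤ 1/2 := by
      have h4s : (4:ℝ) * s ≤ 2 ^ s := by
        exact_mod_cast aux_four_mul_le_two_pow s h4
      have h2s : (0:ℝ) < 2 ^ s := by positivity
      have hys : y = 2 / 2^s := by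
        rw [hy, div_pow, one_pow]; field_simp
      rw [hys, show (s:ℝ) * (2/2^s) = (2*s)/2^s by ring, div_le_iff₀ h2s]
      nlinarith
    have hben : (1:ℝ) - s * y ≤ (1 - y)^s := by
      have h := one_add_mul_le_pow (a := -y) (by nlinarith) s
      calc (1:ℝ) - s*y = 1 + s * (-y) := by ring
      _ ≤ (1 + -y)^s := h
      _ = (1 - y)^s := by ring_nf
    have h1y : (0:ℝ) < (1 - y)^s := by nlinarith
    have hprod : (1+y)^s * (1-y)^s < 1 := by
      rw [← mul_pow]
      have h1 : (1+y)*(1-y) = 1 - y^2 := by ring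
      rw [h1]
      apply pow_lt_one₀ (by nlinarith) (by nlinarith) (by omega)
    have h2y : 1 ≤ 2 * (1-y)^s := by nlinarith
    exact (mul_lt_mul_iff_left₀ h1y).mp (by nlinarith)

lemma aux_key_ineq (s : ℕ) (hs : 3 ≤ s) (a : ℝ)
    (h1 : 1/2 + 1/2^s ≤ a) (h2 : a ≤ 1 / Real.sqrt 2) :
    a ^ s < 2 * a - 1 := by
  have hr2 : Real.sqrt 2 ^ 2 = 2 := Real.sq_sqrt (by norm_num)
  have hr0 : (0:ℝ) < Real.sqrt 2 := Real.sqrt_pos.mpr (by norm_num)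
  have hr1 : (1:ℝ) < Real.sqrt 2 := by nlinarith
  set L : ℝ := 1/2 + 1/2^s with hL
  set R : ℝ := 1 / Real.sqrt 2 with hR
  have hL0 : (0:ℝ) < L := by positivity
  have hR0 : (0:ℝ) < R := by positivity
  have hE1 : L^s < 2*L - 1 := by
    have key := aux_one_add_pow_lt_two s hs
    have hLeq : L = (1/2) * (1 + 2*(1/2)^s) := by
      rw [hL, div_pow, one_pow]; ring
    have hx : (0:ℝ) < (1/2:ℝ)^s := by positivity
    have hLs : L^s = (1/2)^s * (1 + 2*(1/2)^s)^s := by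
      rw [hLeq, mul_pow]
    have h2L : 2*L - 1 = (1/2)^s * 2 := by rw [hL, div_pow, one_pow]; ring
    rw [hLs, h2L]
    exact (mul_lt_mul_iff_right₀ hx).mpr key
  have hE2 : R^s < 2*R - 1 := by
    have hRle1 : R ≤ 1 := by
      rw [hR, div_le_one hr0]; linarith
    have h3 : R^s ≤ R^3 := pow_le_pow_of_le_one hR0.le hRle1 hs
    have hRval : R * Real.sqrt 2 = 1 := by rw [hR]; field_simp
    have : R^3 < 2*R - 1 := by nlinarith [hr2, hr0, hr1, hRval, sq_nonneg (R - 1/2)]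
    linarith
  have hLR : L < R := by
    have h8 : (8:ℝ) ≤ 2^s := by
      calc (8:ℝ) = 2^3 := by norm_num
      _ ≤ 2^s := pow_le_pow_right₀ (by norm_num) hs
    have hLle : L ≤ 5/8 := by
      rw [hL]
      have : 1/(2:ℝ)^s ≤ 1/8 := by
        apply div_le_div_of_nonneg_left (by norm_num) (by norm_num) h8
      linarith
    have : (5:ℝ)/8 < R := by
      rw [hR, lt_div_iff₀ hr0]; nlinarith
    exact lt_of_le_of_lt hLle this
  set t : ℝ := (R - a)/(R - L) with ht
  have hRL : (0:ℝ) < R - L := by linarith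
  have ht0 : 0 ≤ t := by apply div_nonneg; linarith; linarith
  have ht1 : t ≤ 1 := by rw [ht, div_le_one hRL]; linarith
  have ha : a = t*L + (1-t)*R := by rw [ht]; field_simp; ring
  have hconv := (convexOn_pow (𝕜 := ℝ) s).2 (Set.mem_Ici.mpr hL0.le)
    (Set.mem_Ici.mpr hR0.le) ht0 (by linarith : (0:ℝ) ≤ 1 - t) (by ring)
  simp only [smul_eq_mul] at hconv
  rw [← ha] at hconv
  nlinarith [mul_le_mul_of_nonneg_left hE1.le ht0,
    mul_le_mul_of_nonneg_left hE2.le (by linarith : (0:ℝ) ≤ 1 - t),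
    mul_lt_mul_of_pos_left hE1 (by linarith : (0:ℝ) < 1 - t + t)]



/-- Cyclic counterexample for generalized Newton: for the cyclic Toeplitz
matrix `S` with subdiagonal (and corner) entries `a`, `1/2 + 1/2^s ≤ a ≤ 1/√2`,
`s > 2`, and right-hand side `ĉ = (1,…,1)`, if `z` has no zero components and
exactly one negative component, in position `i`, then the generalized Newton
iterate `z⁺ = (I - S Σ(z))⁻¹ ĉ` has no zero components and exactly one
negative component, in the cyclically next position `i + 1`. -/
theorem generalized_newton_cycles
    (m : ℕ) (a : ℝ)
    (ha1 : 1 / 2 + 1 / 2 ^ (m + 3) ≤ a) (ha2 : a ≤ 1 / Real.sqrt 2)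
    (z : Fin (m + 3) → ℝ) (i : Fin (m + 3))
    (hzi : z i < 0) (hz : ∀ j, j ≠ i → 0 < z j) :
    (∀ j, ((1 - (Matrix.of fun p q : Fin (m + 3) => if p = q + 1 then a else 0) *
        Matrix.diagonal fun j => Real.sign (z j))⁻¹.mulVec fun _ => (1 : ℝ)) j ≠ 0) ∧
    ((1 - (Matrix.of fun p q : Fin (m + 3) => if p = q + 1 then a else 0) *
        Matrix.diagonal fun j => Real.sign (z j))⁻¹.mulVec fun _ => (1 : ℝ)) (i + 1) < 0 ∧
    ∀ j, j ≠ i + 1 →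
      0 < ((1 - (Matrix.of fun p q : Fin (m + 3) => if p = q + 1 then a else 0) *
        Matrix.diagonal fun j => Real.sign (z j))⁻¹.mulVec fun _ => (1 : ℝ)) j := by
  have hr2 : Real.sqrt 2 ^ 2 = 2 := Real.sq_sqrt (by norm_num)
  have hr0 : (0:ℝ) < Real.sqrt 2 := Real.sqrt_pos.mpr (by norm_num)
  have hr1 : (1:ℝ) < Real.sqrt 2 := by nlinarith
  have ha0 : (0:ℝ) < a := by
    have h : (0:ℝ) < 1/2^(m+3) := by positivity
    linarith
  have ha1' : a < 1 := by
    have h : 1 / Real.sqrt 2 < 1 := by rw [div_lt_one hr0]; exact hr1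
    linarith
  have hasq : 2 * a^2 ≤ 1 := by
    have h := (le_div_iff₀ hr0).mp ha2
    nlinarith [mul_nonneg ha0.le hr0.le]
  have key : a^(m+3) < 2*a - 1 := aux_key_ineq (m+3) (by omega) a ha1 ha2
  have hapow : (0:ℝ) < a^(m+3) := by positivity
  -- sign facts
  have hσ : ∀ j, Real.sign (z j) = if j = i then -1 else 1 := by
    intro j
    by_cases h : j = i
    · simp [h, Real.sign_of_neg hzi]
    · simp [h, Real.sign_of_pos (hz j h)]
  set M : Matrix (Fin (m+3)) (Fin (m+3)) ℝ :=
    1 - (Matrix.of fun p q : Fin (m + 3) => if p = q + 1 then a else 0) *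
      Matrix.diagonal fun j => Real.sign (z j) with hMdef
  -- mulVec formula
  have hMapp : ∀ (v : Fin (m+3) → ℝ) (p : Fin (m+3)),
      M.mulVec v p = v p - a * Real.sign (z (p-1)) * v (p-1) := by
    intro v p
    simp only [hMdef, Matrix.mulVec, dotProduct, Matrix.sub_apply, Matrix.one_apply,
      Matrix.mul_diagonal, Matrix.of_apply]
    have hsum : (∑ q, ((if p = q then (1:ℝ) else 0)
          - (if p = q + 1 then a else 0) * Real.sign (z q)) * v q)
        = (∑ q, (if p = q then v q else 0))
          - (∑ q, (if p - 1 = q then a * Real.sign (z q) * v q else 0)) := by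
      rw [← Finset.sum_sub_distrib]
      apply Finset.sum_congr rfl
      intro q _
      have hiff : (p = q + 1) ↔ (p - 1 = q) := by
        constructor
        · intro h; rw [h]; exact add_sub_cancel_right q 1
        · intro h; rw [← h]; exact (sub_add_cancel p 1).symm
      by_cases h1 : p = q <;> by_cases h2 : p - 1 = q <;>
        simp [h1, h2, hiff] <;> ring
    rw [hsum, Finset.sum_ite_eq, Finset.sum_ite_eq]
    simp
  -- determinant nonzero
  have hdet : M.det ≠ 0 := by
    intro hd
    obtain ⟨v, hv0, hv⟩ := Matrix.exists_mulVec_eq_zero_iff.mpr hd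
    apply hv0
    have habs : ∀ p, |v p| = a * |v (p-1)| := by
      intro p
      have h1 : M.mulVec v p = 0 := by rw [hv]; rfl
      rw [hMapp] at h1
      have h2 : v p = a * Real.sign (z (p-1)) * v (p-1) := by linarith
      rw [h2, abs_mul, abs_mul, abs_of_pos ha0]
      have : |Real.sign (z (p-1))| = 1 := by
        rw [hσ]; by_cases h : p - 1 = i <;> simp [h]
      rw [this, mul_one]
    open Fin.NatCast Fin.CommRing in
    have hiter : ∀ (n : ℕ) (p : Fin (m+3)), |v p| = a^n * |v (p - (n : Fin (m+3)))| := by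
      intro n
      induction n with
      | zero => intro p; simp
      | succ n ih =>
        intro p
        rw [ih p, habs (p - (n : Fin (m+3)))]
        have hc : ((n+1 : ℕ) : Fin (m+3)) = (n : Fin (m+3)) + 1 := by push_cast; ring
        rw [hc, sub_sub]
        ring
    funext p
    have h := hiter (m+3) p
    rw [Fin.natCast_self, sub_zero] at h
    have hlt : a^(m+3) < 1 := pow_lt_one₀ ha0.le ha1' (by omega)
    have : |v p| = 0 := by nlinarith [abs_nonneg (v p)]
    simpa using abs_eq_zero.mp this
  have hdetu : IsUnit M.det := isUnit_iff_ne_zero.mpr hdet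
  -- the explicit solution
  set ζ : ℝ := (1 - 2*a + a^(m+3)) / ((1 + a^(m+3)) * (1 - a)) with hζdef
  set g : ℕ → ℝ := fun n => (∑ j ∈ Finset.range n, a^j) + a^n * ζ with hgdef
  have hg0 : g 0 = ζ := by simp [hgdef]
  have hgsucc : ∀ n, g (n+1) = 1 + a * g n := by
    intro n
    simp only [hgdef, geom_sum_succ, pow_succ]
    ring
  have hden : (0:ℝ) < (1 + a^(m+3)) * (1 - a) := by
    apply mul_pos (by positivity) (by linarith)
  have hζneg : ζ < 0 := div_neg_of_neg_of_pos (by linarith) hden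
  have hwrap : ζ + a * g (m+2) = 1 := by
    have hsum : (∑ j ∈ Finset.range (m+2), a^j) = (a^(m+2) - 1)/(a - 1) :=
      geom_sum_eq (by linarith) (m+2)
    simp only [hgdef, hsum, hζdef]
    have h1 : a - 1 ≠ 0 := by linarith
    have h2 : (1:ℝ) - a ≠ 0 := by linarith
    have h3 : (1:ℝ) + a^(m+3) ≠ 0 := by positivity
    field_simp
    ring
  have hg1 : 0 < g 1 := by
    rw [hgsucc 0, hg0]
    have heq : 1 + a * ζ = (1 - 2*a^2 + a^(m+3)) / ((1 + a^(m+3)) * (1 - a)) := by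
      rw [hζdef]
      have h2 : (1:ℝ) - a ≠ 0 := by linarith
      have h3 : (1:ℝ) + a^(m+3) ≠ 0 := by positivity
      field_simp
      ring
    rw [heq]
    apply div_pos (by nlinarith) hden
  have hgpos : ∀ n, 0 < g (n+1) := by
    intro n
    induction n with
    | zero => exact hg1
    | succ n ih =>
      rw [hgsucc (n+1)]
      nlinarith
  set w : Fin (m+3) → ℝ := fun q => g ((q - (i+1)).val) with hwdef
  have hMw : M.mulVec w = (fun _ => (1:ℝ)) := by
    funext p
    rw [hMapp, hσ]
    by_cases hp : p = i + 1
    · subst hp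
      have h1 : i + 1 - 1 = i := add_sub_cancel_right i 1
      rw [h1, if_pos rfl]
      have h2 : w (i+1) = g 0 := by
        simp only [hwdef, sub_self, Fin.val_zero]
      have h3 : w i = g (m+2) := by
        have : i - (i+1) = 0 - 1 := by abel
        simp only [hwdef, this, Fin.coe_sub_one, Fin.val_zero]
        simp
      rw [h2, h3, hg0]
      linarith [hwrap]
    · have hp1 : p - 1 ≠ i := by
        intro h
        apply hp
        rw [← h, sub_add_cancel]
      rw [if_neg hp1]
      have hne : p - (i+1) ≠ 0 := sub_ne_zero.mpr hp
      have hkne : (p - (i+1)).val ≠ 0 := fun h => hne (Fin.ext (by simp [h]))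
      obtain ⟨k, hk⟩ := Nat.exists_eq_succ_of_ne_zero hkne
      have hsub : p - 1 - (i+1) = (p - (i+1)) - 1 := by abel
      have hval : ((p - (i+1)) - 1).val = k := by
        rw [Fin.coe_sub_one, if_neg hne, hk]
        omega
      have hwp : w p = g (k+1) := by simp only [hwdef, hk]
      have hwp1 : w (p-1) = g k := by
        simp only [hwdef, hsub, hval]
      rw [hwp, hwp1, hgsucc]
      ring
  have hinvM : M⁻¹.mulVec (fun _ => (1:ℝ)) = w := by
    rw [← hMw, Matrix.mulVec_mulVec, Matrix.nonsing_inv_mul M hdetu, Matrix.one_mulVec]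
  rw [hinvM]
  refine ⟨?_, ?_, ?_⟩
  · intro j
    rcases Nat.eq_zero_or_pos ((j - (i+1)).val) with h0 | h0
    · have : w j = ζ := by simp only [hwdef, h0, hg0]
      rw [this]; exact ne_of_lt hζneg
    · obtain ⟨k, hk⟩ := Nat.exists_eq_succ_of_ne_zero (Nat.pos_iff_ne_zero.mp h0)
      have : w j = g (k+1) := by simp only [hwdef, hk]
      rw [this]; exact ne_of_gt (hgpos k)
  · have : w (i+1) = ζ := by simp only [hwdef, sub_self, Fin.val_zero, hg0]
    rw [this]; exact hζneg
  · intro j hj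
    have hne : j - (i+1) ≠ 0 := sub_ne_zero.mpr hj
    have hkne : (j - (i+1)).val ≠ 0 := fun h => hne (Fin.ext (by simp [h]))
    obtain ⟨k, hk⟩ := Nat.exists_eq_succ_of_ne_zero hkne
    have : w j = g (k+1) := by simp only [hwdef, hk]
    rw [this]; exact hgpos k
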